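/- Let n ≥ 1, σ : Fin n ≃ Fin n a permutation, Lˢ, Lᵗ n×n real matrices, t real, K ≥ 1. Define Ψᶻ = ∑_{k=1}^{K} ((−t)^k / k!) (Lᶻ)^k for z ∈ {s,t}, Bᶻ_{ij} = Ψ̄ − Ψᶻ_{ij} for i ≠ j and Bᶻ_{ii} = 0 (Ψ̄ a real constant), and Δ⁽ᵏ⁾_{ij} = ((Lˢ)^k)_{ij} − ((Lᵗ)^k)_{σ(i)σ(j)}. Let ε₁,…,ε_K ≥ 0 and assume that for EVERY node i and every k ∈ {1,…,K}: ∑_{j=1}^{n} (Δ⁽ᵏ⁾_{ij})² ≤ ε_k. Then the total quadratic assignment objective of the permutation matching satisfies ∑_{i=1}^{n} ∑_{j=1}^{n} (Bˢ_{ij} − Bᵗ_{σ(i)σ(j)})² ≤ n · K · ∑_{k=1}^{K} (t^k / k!)² · ε_k. -/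

import Mathlib

/-- Summed (global) corollary of Theorem 1 of the paper: bound on the total quadratic
assignment objective of the true permutation matching. -/
theorem sigma_theorem1_global
    (n K : ℕ) (hn : 1 ≤ n) (hK : 1 ≤ K)
    (σ : Equiv.Perm (Fin n)) (Ls Lt : Matrix (Fin n) (Fin n) ℝ) (t Ψbar : ℝ)
    (Ψs Ψt : Matrix (Fin n) (Fin n) ℝ)
    (hΨs : Ψs = ∑ k ∈ Finset.Icc 1 K, ((-t) ^ k / (Nat.factorial k : ℝ)) • Ls ^ k)
    (hΨt : Ψt = ∑ k ∈ Finset.Icc 1 K, ((-t) ^ k / (Nat.factorial k : ℝ)) • Lt ^ k)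
    (Bs Bt : Matrix (Fin n) (Fin n) ℝ)
    (hBs : ∀ i j : Fin n, Bs i j = if i = j then 0 else Ψbar - Ψs i j)
    (hBt : ∀ i j : Fin n, Bt i j = if i = j then 0 else Ψbar - Ψt i j)
    (Δ : ℕ → Matrix (Fin n) (Fin n) ℝ)
    (hΔ : ∀ (k : ℕ) (i j : Fin n), Δ k i j = (Ls ^ k) i j - (Lt ^ k) (σ i) (σ j))
    (ε : ℕ → ℝ) (hε : ∀ k ∈ Finset.Icc 1 K, 0 ≤ ε k)
    (hbound : ∀ i : Fin n, ∀ k ∈ Finset.Icc 1 K, ∑ j : Fin n, (Δ k i j) ^ 2 ≤ ε k) :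
    ∑ i : Fin n, ∑ j : Fin n, (Bs i j - Bt (σ i) (σ j)) ^ 2 ≤
      (n : ℝ) * (K : ℝ) * ∑ k ∈ Finset.Icc 1 K, (t ^ k / (Nat.factorial k : ℝ)) ^ 2 * ε k := by
  have key : ∀ i j : Fin n, (Bs i j - Bt (σ i) (σ j)) ^ 2 ≤
      (K : ℝ) * ∑ k ∈ Finset.Icc 1 K,
        (t ^ k / (Nat.factorial k : ℝ)) ^ 2 * (Δ k i j) ^ 2 := by
    intro i j
    by_cases hij : i = j
    · subst hij
      have : (Bs i i - Bt (σ i) (σ i)) ^ 2 = 0 := by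
        rw [hBs, hBt]; simp
      rw [this]
      have : (0:ℝ) ≤ ∑ k ∈ Finset.Icc 1 K,
          (t ^ k / (Nat.factorial k : ℝ)) ^ 2 * (Δ k i i) ^ 2 := by positivity
      positivity
    · have hσij : σ i ≠ σ j := fun h => hij (σ.injective h)
      have hdiff : Bs i j - Bt (σ i) (σ j)
          = ∑ k ∈ Finset.Icc 1 K,
            ((-t) ^ k / (Nat.factorial k : ℝ)) * (-(Δ k i j)) := by
        rw [hBs, hBt, if_neg hij, if_neg hσij, hΨs, hΨt]
        simp only [Matrix.sum_apply, Matrix.smul_apply, smul_eq_mul, hΔ]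
        simp only [mul_neg, neg_sub, mul_sub]
        rw [Finset.sum_sub_distrib]
        ring
      rw [hdiff]
      calc (∑ k ∈ Finset.Icc 1 K,
            ((-t) ^ k / (Nat.factorial k : ℝ)) * (-(Δ k i j))) ^ 2
          ≤ (Finset.Icc 1 K).card * ∑ k ∈ Finset.Icc 1 K,
            (((-t) ^ k / (Nat.factorial k : ℝ)) * (-(Δ k i j))) ^ 2 :=
          sq_sum_le_card_mul_sum_sq
        _ = (K : ℝ) * ∑ k ∈ Finset.Icc 1 K,
            (t ^ k / (Nat.factorial k : ℝ)) ^ 2 * (Δ k i j) ^ 2 := by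
          rw [Nat.card_Icc]
          simp only [Nat.add_sub_cancel]
          congr 1
          apply Finset.sum_congr rfl
          intro k _
          have h1 : ((-t) ^ k) ^ 2 = (t ^ k) ^ 2 := by
            rw [← pow_mul, ← pow_mul, mul_comm k 2, pow_mul, pow_mul, neg_sq]
          rw [mul_pow, div_pow, h1, neg_sq, ← div_pow]
      done
  calc ∑ i : Fin n, ∑ j : Fin n, (Bs i j - Bt (σ i) (σ j)) ^ 2
      ≤ ∑ i : Fin n, ∑ j : Fin n, (K : ℝ) * ∑ k ∈ Finset.Icc 1 K,
          (t ^ k / (Nat.factorial k : ℝ)) ^ 2 * (Δ k i j) ^ 2 :=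
      Finset.sum_le_sum fun i _ => Finset.sum_le_sum fun j _ => key i j
    _ = ∑ i : Fin n, (K : ℝ) * ∑ k ∈ Finset.Icc 1 K,
          (t ^ k / (Nat.factorial k : ℝ)) ^ 2 * ∑ j : Fin n, (Δ k i j) ^ 2 := by
      apply Finset.sum_congr rfl
      intro i _
      rw [← Finset.mul_sum, Finset.sum_comm]
      congr 1
      apply Finset.sum_congr rfl
      intro k _
      rw [Finset.mul_sum]
    _ ≤ ∑ i : Fin n, (K : ℝ) * ∑ k ∈ Finset.Icc 1 K,
          (t ^ k / (Nat.factorial k : ℝ)) ^ 2 * ε k := by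
      apply Finset.sum_le_sum
      intro i _
      apply mul_le_mul_of_nonneg_left _ (by positivity)
      apply Finset.sum_le_sum
      intro k hk
      exact mul_le_mul_of_nonneg_left (hbound i k hk) (by positivity)
    _ = (n : ℝ) * (K : ℝ) * ∑ k ∈ Finset.Icc 1 K,
          (t ^ k / (Nat.factorial k : ℝ)) ^ 2 * ε k := by
      rw [Finset.sum_const, Finset.card_univ, Fintype.card_fin, nsmul_eq_mul, mul_assoc]
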